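/- Vanishing jump moments of the elemental nonconforming bubble (first step of the proof of Lemma 1.3): let p be an even positive integer, let V₁, V₂, V₃ be affinely independent points of ℝ² with barycentric coordinates λ₁, λ₂, λ₃, and define b(x) := (1/2)(−1 + L_p(1−2λ₁(x)) + L_p(1−2λ₂(x)) + L_p(1−2λ₃(x))). Then for every pair of distinct indices i, j and every univariate polynomial q of degree at most p−1, ∫₀¹ b(V_i + t(V_j − V_i)) q(t) dt = 0. -/

import Mathlib

open MeasureTheory Polynomial

/-- The Legendre polynomial of degree `k`, via Rodrigues' formula
`L_k(x) = (1/(2^k k!)) (d/dx)^k [(x² − 1)^k]`. -/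
noncomputable def legendre (k : ℕ) : Polynomial ℝ :=
  ((2 ^ k * k.factorial : ℝ)⁻¹) •
    ((fun q : Polynomial ℝ => Polynomial.derivative q)^[k] ((Polynomial.X ^ 2 - 1) ^ k))

lemma W_factor (c : ℝ) (hc : c ^ 2 = 1) (p : ℕ) :
    ((X : ℝ[X]) ^ 2 - 1) ^ p = (X - C c) ^ p * (X + C c) ^ p := by
  rw [← mul_pow]
  congr 1
  have : (C c : ℝ[X]) * C c = 1 := by rw [← C_mul, ← sq, hc, map_one]
  ring_nf
  rw [← this]; ring

lemma eval_iter_deriv_factor_lt (c : ℝ) (g : ℝ[X]) (p k : ℕ) (hk : k < p) :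
    Polynomial.eval c (Polynomial.derivative^[k] ((X - C c) ^ p * g)) = 0 := by
  rw [Polynomial.iterate_derivative_mul, Polynomial.eval_finset_sum]
  apply Finset.sum_eq_zero
  intro i hi
  rw [Polynomial.eval_smul, Polynomial.eval_mul, Polynomial.iterate_derivative_X_sub_pow,
    Polynomial.eval_smul, Polynomial.eval_pow, Polynomial.eval_sub, Polynomial.eval_X,
    Polynomial.eval_C, sub_self]
  have : 0 < p - (k - i) := Nat.sub_pos_of_lt (lt_of_le_of_lt (Nat.sub_le k i) hk)
  rw [zero_pow (by omega : p - (k - i) ≠ 0), smul_zero, zero_mul, smul_zero]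

lemma eval_iter_deriv_factor_self (c : ℝ) (g : ℝ[X]) (p : ℕ) :
    Polynomial.eval c (Polynomial.derivative^[p] ((X - C c) ^ p * g)) =
      (p.factorial : ℝ) * g.eval c := by
  rw [Polynomial.iterate_derivative_mul, Polynomial.eval_finset_sum]
  rw [Finset.sum_eq_single 0]
  · simp [Polynomial.iterate_derivative_X_sub_pow_self]
  · intro i hi hi0
    rw [Polynomial.eval_smul, Polynomial.eval_mul, Polynomial.iterate_derivative_X_sub_pow,
      Polynomial.eval_smul, Polynomial.eval_pow, Polynomial.eval_sub, Polynomial.eval_X,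
      Polynomial.eval_C, sub_self]
    have hip : i ≤ p := Nat.lt_succ_iff.mp (Finset.mem_range.mp hi)
    have : p - (p - i) = i := Nat.sub_sub_self hip
    rw [this, zero_pow hi0, smul_zero, zero_mul, smul_zero]
  · intro h; simp at h

lemma boundary_zero (p k : ℕ) (hk : k < p) (c : ℝ) (hc : c ^ 2 = 1) :
    Polynomial.eval c (Polynomial.derivative^[k] (((X : ℝ[X]) ^ 2 - 1) ^ p)) = 0 := by
  rw [W_factor c hc p]
  exact eval_iter_deriv_factor_lt c _ p k hk

lemma legendre_eval_one (p : ℕ) : (legendre p).eval 1 = 1 := by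
  rw [legendre, Polynomial.eval_smul, smul_eq_mul, W_factor (1 : ℝ) (one_pow 2) p,
    eval_iter_deriv_factor_self]
  have : Polynomial.eval (1:ℝ) ((X + C 1) ^ p) = 2 ^ p := by
    simp; norm_num
  rw [this]
  have h2 : (2:ℝ) ^ p * (p.factorial : ℝ) ≠ 0 := by positivity
  field_simp

lemma ortho_aux (p : ℕ) : ∀ m, m ≤ p → ∀ q : ℝ[X], q.natDegree < m →
    ∫ x in (-1:ℝ)..1,
      (Polynomial.derivative^[m] (((X : ℝ[X]) ^ 2 - 1) ^ p)).eval x * q.eval x = 0 := by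
  intro m
  induction m with
  | zero => intro _ q hq; exact absurd hq (Nat.not_lt_zero _)
  | succ m ih =>
    intro hm q hq
    set W : ℝ[X] := ((X : ℝ[X]) ^ 2 - 1) ^ p with hW
    have key := intervalIntegral.integral_mul_deriv_eq_deriv_mul
      (a := (-1:ℝ)) (b := 1)
      (u := fun x => q.eval x) (u' := fun x => (Polynomial.derivative q).eval x)
      (v := fun x => (Polynomial.derivative^[m] W).eval x)
      (v' := fun x => (Polynomial.derivative^[m+1] W).eval x)
      (fun x _ => q.hasDerivAt x)
      (fun x _ => by
        have := (Polynomial.derivative^[m] W).hasDerivAt x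
        rwa [← Function.iterate_succ_apply' Polynomial.derivative m W] at this)
      ((Polynomial.continuous _).intervalIntegrable _ _)
      ((Polynomial.continuous _).intervalIntegrable _ _)
    have hb1 : Polynomial.eval (1:ℝ) (Polynomial.derivative^[m] W) = 0 :=
      boundary_zero p m (lt_of_lt_of_le (Nat.lt_succ_self m) hm) 1 (one_pow 2)
    have hb2 : Polynomial.eval (-1:ℝ) (Polynomial.derivative^[m] W) = 0 :=
      boundary_zero p m (lt_of_lt_of_le (Nat.lt_succ_self m) hm) (-1) (by norm_num)
    rw [hb1, hb2, mul_zero, mul_zero, sub_zero, zero_sub] at key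
    have hrest : ∫ x in (-1:ℝ)..1,
        (Polynomial.derivative q).eval x * (Polynomial.derivative^[m] W).eval x = 0 := by
      by_cases hq0 : Polynomial.derivative q = 0
      · simp [hq0]
      · have hd : q.natDegree ≠ 0 := by
          intro h
          exact hq0 (by
            have := Polynomial.natDegree_eq_zero.mp h
            obtain ⟨a, rfl⟩ := this
            simp)
        have : (Polynomial.derivative q).natDegree < m := by
          have h1 := Polynomial.natDegree_derivative_lt (p := q) hd
          omega
        have := ih (le_of_lt (Nat.lt_of_succ_le hm)) (Polynomial.derivative q) this
        calc ∫ x in (-1:ℝ)..1,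
              (Polynomial.derivative q).eval x * (Polynomial.derivative^[m] W).eval x
            = ∫ x in (-1:ℝ)..1,
              (Polynomial.derivative^[m] W).eval x * (Polynomial.derivative q).eval x := by
              congr 1; ext x; ring
          _ = 0 := this
    calc ∫ x in (-1:ℝ)..1, (Polynomial.derivative^[m+1] W).eval x * q.eval x
        = ∫ x in (-1:ℝ)..1, q.eval x * (Polynomial.derivative^[m+1] W).eval x := by
          congr 1; ext x; ring
      _ = 0 := by rw [key, hrest, neg_zero]

lemma legendre_ortho (p : ℕ) (q : ℝ[X]) (hq : q.natDegree < p) :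
    ∫ x in (-1:ℝ)..1, (legendre p).eval x * q.eval x = 0 := by
  have : ∫ x in (-1:ℝ)..1, (legendre p).eval x * q.eval x =
      ((2 ^ p * p.factorial : ℝ)⁻¹) * ∫ x in (-1:ℝ)..1,
        (Polynomial.derivative^[p] (((X : ℝ[X]) ^ 2 - 1) ^ p)).eval x * q.eval x := by
    rw [← intervalIntegral.integral_const_mul]
    congr 1; ext x
    rw [legendre, Polynomial.eval_smul, smul_eq_mul]; ring
  rw [this, ortho_aux p p le_rfl q hq, mul_zero]

lemma sub1 (p : ℕ) (q : ℝ[X]) (hq : q.natDegree < p) :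
    ∫ t in (0:ℝ)..1, (legendre p).eval (2*t - 1) * q.eval t = 0 := by
  set r : ℝ[X] := q.comp (C (2:ℝ)⁻¹ * X + C (2:ℝ)⁻¹) with hr
  have hdeg : r.natDegree < p := by
    rw [hr, Polynomial.natDegree_comp, Polynomial.natDegree_linear (by norm_num), mul_one]
    exact hq
  have hqr : ∀ t : ℝ, q.eval t = r.eval (2*t - 1) := by
    intro t
    rw [hr, Polynomial.eval_comp]
    norm_num
    ring_nf
  have key : ∀ t : ℝ, (legendre p).eval (2*t - 1) * q.eval t =
      (legendre p * r).eval (2*t + (-1)) := by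
    intro t
    rw [Polynomial.eval_mul, hqr t]
    ring_nf
  have := intervalIntegral.integral_comp_mul_add (a := (0:ℝ)) (b := 1)
    (f := fun x => (legendre p * r).eval x) (c := 2) (by norm_num) (-1)
  simp only [key]
  rw [this]
  norm_num
  have horth := legendre_ortho p r hdeg
  exact horth

lemma sub2 (p : ℕ) (q : ℝ[X]) (hq : q.natDegree < p) :
    ∫ t in (0:ℝ)..1, (legendre p).eval (1 - 2*t) * q.eval t = 0 := by
  set r : ℝ[X] := q.comp (C (-(2:ℝ)⁻¹) * X + C (2:ℝ)⁻¹) with hr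
  have hdeg : r.natDegree < p := by
    rw [hr, Polynomial.natDegree_comp, Polynomial.natDegree_linear (by norm_num), mul_one]
    exact hq
  have hqr : ∀ t : ℝ, q.eval t = r.eval (1 - 2*t) := by
    intro t
    rw [hr, Polynomial.eval_comp]
    norm_num
    ring_nf
  have key : ∀ t : ℝ, (legendre p).eval (1 - 2*t) * q.eval t =
      (legendre p * r).eval ((-2)*t + 1) := by
    intro t
    rw [Polynomial.eval_mul, hqr t]
    ring_nf
  have := intervalIntegral.integral_comp_mul_add (a := (0:ℝ)) (b := 1)
    (f := fun x => (legendre p * r).eval x) (c := -2) (by norm_num) 1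
  simp only [key]
  rw [this]
  norm_num
  have horth := legendre_ortho p r hdeg
  rw [intervalIntegral.integral_symm, horth, neg_zero]

lemma case_core (p : ℕ) (q : ℝ[X]) (hq : q.natDegree < p) (f : ℝ → ℝ)
    (hf : ∀ t : ℝ, f t = (1/2 : ℝ) *
      (-1 + (legendre p).eval (2*t - 1) + (legendre p).eval (1 - 2*t) + 1)) :
    ∫ t in (0:ℝ)..1, f t * q.eval t = 0 := by
  have hfe : (fun t => f t * q.eval t) = fun t =>
      (1/2 : ℝ) * ((legendre p).eval (2*t - 1) * q.eval t) +
      (1/2 : ℝ) * ((legendre p).eval (1 - 2*t) * q.eval t) := by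
    funext t; rw [hf]; ring
  have c1 : Continuous fun t : ℝ => (legendre p).eval (2*t - 1) * q.eval t :=
    ((legendre p).continuous.comp (by continuity)).mul q.continuous
  have c2 : Continuous fun t : ℝ => (legendre p).eval (1 - 2*t) * q.eval t :=
    ((legendre p).continuous.comp (by continuity)).mul q.continuous
  rw [hfe, intervalIntegral.integral_add
      ((c1.const_mul (1/2 : ℝ)).intervalIntegrable _ _) ((c2.const_mul (1/2 : ℝ)).intervalIntegrable _ _),
    intervalIntegral.integral_const_mul, intervalIntegral.integral_const_mul,
    sub1 p q hq, sub2 p q hq]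
  ring

/-- Vanishing jump moments of the elemental nonconforming bubble: for even `p`, the edge
moments of `b = (1/2)(−1 + Σᵢ L_p(1−2λᵢ))` against all univariate polynomials of degree at
most `p − 1` vanish. -/
theorem elemental_bubble_vanishing_moments (p : ℕ) (hp_pos : 0 < p) (hp_even : Even p)
    (V : Fin 3 → (Fin 2 → ℝ)) (hV : AffineIndependent ℝ V)
    (lam : Fin 3 → ((Fin 2 → ℝ) →ᵃ[ℝ] ℝ))
    (hlam : ∀ i j : Fin 3, lam i (V j) = if i = j then 1 else 0)
    (b : (Fin 2 → ℝ) → ℝ)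
    (hb : ∀ x : Fin 2 → ℝ, b x = (1 / 2 : ℝ) *
      (-1 + (legendre p).eval (1 - 2 * lam 0 x) + (legendre p).eval (1 - 2 * lam 1 x) +
        (legendre p).eval (1 - 2 * lam 2 x))) :
    ∀ i j : Fin 3, i ≠ j → ∀ q : Polynomial ℝ, q.natDegree ≤ p - 1 →
      ∫ t in (0:ℝ)..1, b (V i + t • (V j - V i)) * q.eval t = 0 := by
  intro i j hij q hq
  have hqlt : q.natDegree < p := by omega
  have hedge : ∀ (k : Fin 3) (t : ℝ),
      lam k (V i + t • (V j - V i)) = lam k (V i) + t * (lam k (V j) - lam k (V i)) := by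
    intro k t
    have h1 : V i + t • (V j - V i) = AffineMap.lineMap (V i) (V j) t := by
      rw [AffineMap.lineMap_apply]
      simp only [vsub_eq_sub, vadd_eq_add]
      abel
    rw [h1, AffineMap.apply_lineMap, AffineMap.lineMap_apply]
    simp only [vsub_eq_sub, vadd_eq_add, smul_eq_mul]
    ring
  have key : ∀ t : ℝ, b (V i + t • (V j - V i)) = (1/2 : ℝ) *
      (-1 + (legendre p).eval (2*t - 1) + (legendre p).eval (1 - 2*t) + 1) := by
    intro t
    rw [hb, hedge 0 t, hedge 1 t, hedge 2 t]
    fin_cases i <;> fin_cases j <;>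
      first
        | exact absurd rfl hij
        | (simp only [hlam]; norm_num [legendre_eval_one, Fin.ext_iff]; ring_nf)
  exact case_core p q hqlt _ key
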